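/- For every (x,y) ∈ X × Y with y ≠ 0 there exists a unique real λ > ‖x‖ such that ‖y‖ = λ·p(‖x‖/λ), and this λ equals the Minkowski functional (gauge) of the set 𝔻 evaluated at (x,y). -/

import Mathlib

open Set Filter Topology Pointwise

theorem my_midpoint_concave (p : ℝ → ℝ)
    (hp_cont : ContinuousOn p (Icc 0 1))
    (hp_conc : ∀ s₁ ∈ Icc (0:ℝ) 1, ∀ s₂ ∈ Icc (0:ℝ) 1,
      (p s₁ + p s₂) / 2 ≤ p ((s₁ + s₂) / 2)) :
    ∀ u ∈ Icc (0:ℝ) 1, ∀ v ∈ Icc (0:ℝ) 1, ∀ t ∈ Icc (0:ℝ) 1,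
      t * p u + (1 - t) * p v ≤ p (t * u + (1 - t) * v) := by
  intro u hu v hv
  set A : Set ℝ := {t | t ∈ Icc (0:ℝ) 1 ∧ t * p u + (1 - t) * p v ≤ p (t * u + (1 - t) * v)}
    with hA
  have hmemI : ∀ t ∈ Icc (0:ℝ) 1, t * u + (1 - t) * v ∈ Icc (0:ℝ) 1 := by
    intro t ht
    constructor
    · nlinarith [ht.1, ht.2, hu.1, hu.2, hv.1, hv.2]
    · nlinarith [ht.1, ht.2, hu.1, hu.2, hv.1, hv.2]
  have h0 : (0:ℝ) ∈ A := by
    constructor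
    · norm_num
    · norm_num
  have h1 : (1:ℝ) ∈ A := by
    constructor
    · norm_num
    · norm_num
  have hmid : ∀ t₁ ∈ A, ∀ t₂ ∈ A, (t₁ + t₂) / 2 ∈ A := by
    rintro t₁ ⟨ht₁I, ht₁⟩ t₂ ⟨ht₂I, ht₂⟩
    have key := hp_conc _ (hmemI t₁ ht₁I) _ (hmemI t₂ ht₂I)
    have heq : ((t₁ * u + (1 - t₁) * v) + (t₂ * u + (1 - t₂) * v)) / 2
        = ((t₁ + t₂) / 2) * u + (1 - (t₁ + t₂) / 2) * v := by ring
    rw [heq] at key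
    refine ⟨⟨by linarith [ht₁I.1, ht₂I.1], by linarith [ht₁I.2, ht₂I.2]⟩, by linarith⟩
  have hclosed : IsClosed A := by
    have hφ : ContinuousOn (fun t => p (t * u + (1 - t) * v) - (t * p u + (1 - t) * p v))
        (Icc 0 1) := by
      have haff : ContinuousOn (fun t : ℝ => t * u + (1 - t) * v) (Icc 0 1) := by
        fun_prop
      exact ((hp_cont.comp haff hmemI).sub (by fun_prop))
    have : A = Icc (0:ℝ) 1 ∩
        (fun t => p (t * u + (1 - t) * v) - (t * p u + (1 - t) * p v)) ⁻¹' (Ici 0) := by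
      ext t
      simp only [hA, mem_setOf_eq, mem_inter_iff, mem_preimage, mem_Ici, sub_nonneg]
    rw [this]
    exact hφ.preimage_isClosed_of_isClosed isClosed_Icc isClosed_Ici
  have hdyadic : ∀ n : ℕ, ∀ k : ℕ, k ≤ 2 ^ n → ((k : ℝ) / 2 ^ n) ∈ A := by
    intro n
    induction n with
    | zero =>
      intro k hk
      interval_cases k
      · simpa using h0
      · simpa using h1
    | succ n ih =>
      intro k hk
      rcases Nat.even_or_odd k with ⟨m, hm⟩ | ⟨m, hm⟩
      · have hm' : m ≤ 2 ^ n := by omega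
        have := hmid _ (ih m hm') _ (ih m hm')
        have heq : ((m:ℝ)/2^n + (m:ℝ)/2^n) / 2 = (k:ℝ) / 2 ^ (n+1) := by
          subst hm; push_cast; ring
        rwa [heq] at this
      · have hm1 : m ≤ 2 ^ n := by omega
        have hm2 : m + 1 ≤ 2 ^ n := by omega
        have := hmid _ (ih m hm1) _ (ih (m+1) hm2)
        have heq : ((m:ℝ)/2^n + ((m+1:ℕ):ℝ)/2^n) / 2 = (k:ℝ) / 2 ^ (n+1) := by
          subst hm; push_cast; ring
        rwa [heq] at this
  intro t ht
  set seq : ℕ → ℝ := fun n => (⌊t * 2 ^ n⌋₊ : ℝ) / 2 ^ n with hseq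
  have hseqA : ∀ n, seq n ∈ A := by
    intro n
    apply hdyadic
    have h1 : (⌊t * 2 ^ n⌋₊ : ℝ) ≤ t * 2 ^ n := Nat.floor_le (mul_nonneg ht.1 (by positivity))
    have h2 : t * 2 ^ n ≤ 2 ^ n := by nlinarith [ht.2, pow_pos (by norm_num : (0:ℝ) < 2) n]
    exact_mod_cast h1.trans h2
  have hup : ∀ n, seq n ≤ t := by
    intro n
    rw [hseq]
    rw [div_le_iff₀ (by positivity)]
    exact Nat.floor_le (mul_nonneg ht.1 (by positivity))
  have hlow : ∀ n, t - (1/2:ℝ) ^ n ≤ seq n := by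
    intro n
    have := Nat.lt_floor_add_one (t * 2 ^ n)
    rw [hseq]
    rw [sub_le_iff_le_add, div_add' _ _ _ (by positivity : (2:ℝ)^n ≠ 0), le_div_iff₀ (by positivity)]
    have h2 : (1/2:ℝ)^n * 2^n = 1 := by
      rw [one_div, inv_pow, inv_mul_cancel₀ (by positivity)]
    nlinarith [this]
  have htend : Tendsto seq atTop (𝓝 t) := by
    have hz : Tendsto (fun n : ℕ => (1/2:ℝ) ^ n) atTop (𝓝 0) := by
      apply tendsto_pow_atTop_nhds_zero_of_lt_one <;> norm_num
    have h1 : Tendsto (fun n : ℕ => t - (1/2:ℝ) ^ n) atTop (𝓝 t) := by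
      simpa using tendsto_const_nhds.sub hz
    exact tendsto_of_tendsto_of_tendsto_of_le_of_le h1 tendsto_const_nhds hlow hup
  exact (hclosed.mem_of_tendsto htend (Eventually.of_forall hseqA)).2

/-- For every `(x,y) ∈ X × Y` with `y ≠ 0` there exists a unique `λ > ‖x‖` such that
`‖y‖ = λ * p (‖x‖ / λ)`, and this `λ` equals the Minkowski functional (gauge) of `𝔻`
at `(x,y)`. -/
theorem stmt_1 {X Y : Type*} [NormedAddCommGroup X] [NormedSpace ℂ X] [CompleteSpace X]
    [NormedAddCommGroup Y] [NormedSpace ℂ Y] [CompleteSpace Y]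
    (p : ℝ → ℝ)
    (hp_cont : ContinuousOn p (Icc 0 1))
    (hp_maps : ∀ s ∈ Icc (0:ℝ) 1, p s ∈ Icc (0:ℝ) 1)
    (hp0 : p 0 = 1) (hp1 : p 1 = 0)
    (hp_anti : StrictAntiOn p (Icc 0 1))
    (hp_conc : ∀ s₁ ∈ Icc (0:ℝ) 1, ∀ s₂ ∈ Icc (0:ℝ) 1,
      (p s₁ + p s₂) / 2 ≤ p ((s₁ + s₂) / 2))
    (D : Set (X × Y))
    (hD : D = {z : X × Y | ‖z.1‖ < 1 ∧ ‖z.2‖ < 1 ∧ ‖z.2‖ < p ‖z.1‖})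
    (x : X) (y : Y) (hy : y ≠ 0) :
    (∃! l : ℝ, ‖x‖ < l ∧ ‖y‖ = l * p (‖x‖ / l)) ∧
      (‖x‖ < gauge D (x, y) ∧
        ‖y‖ = gauge D (x, y) * p (‖x‖ / gauge D (x, y))) := by
  have hconc := my_midpoint_concave p hp_cont hp_conc
  have ha : (0:ℝ) ≤ ‖x‖ := norm_nonneg x
  have hb : (0:ℝ) < ‖y‖ := norm_pos_iff.mpr hy
  set f : ℝ → ℝ := fun l => l * p (‖x‖ / l) with hf
  -- lower bound p s ≥ 1 - s
  have hlb : ∀ s ∈ Icc (0:ℝ) 1, 1 - s ≤ p s := by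
    intro s hs
    have := hconc 1 (by norm_num) 0 (by norm_num) s hs
    rw [hp0, hp1] at this
    simpa using this
  -- concavity toward 0
  have hkey : ∀ s ∈ Icc (0:ℝ) 1, ∀ t ∈ Icc (0:ℝ) 1, t * p s + (1 - t) ≤ p (t * s) := by
    intro s hs t ht
    have := hconc s hs 0 (by norm_num) t ht
    rw [hp0] at this
    simpa using this
  -- f is strictly monotone on [‖x‖, ∞)
  have hmono : StrictMonoOn f (Ici ‖x‖) := by
    intro l₁ hl₁ l₂ hl₂ hlt
    rcases ha.eq_or_lt with ha0 | ha0
    · simp only [hf, ← ha0, zero_div, hp0, mul_one]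
      exact hlt
    · have hl₁0 : 0 < l₁ := lt_of_lt_of_le ha0 hl₁
      have hl₂0 : 0 < l₂ := hl₁0.trans hlt
      have hs₂ : ‖x‖ / l₂ ∈ Icc (0:ℝ) 1 :=
        ⟨div_nonneg ha hl₂0.le, (div_le_one hl₂0).mpr (hl₁.trans hlt.le)⟩
      have hs₂lt : ‖x‖ / l₂ < 1 := (div_lt_one hl₂0).mpr (lt_of_le_of_lt hl₁ hlt)
      rcases (show ‖x‖ ≤ l₁ from hl₁).eq_or_lt with ha1 | ha1
      · -- l₁ = ‖x‖
        have hfl₁ : f l₁ = 0 := by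
          rw [hf]; simp only [← ha1, div_self ha0.ne', hp1, mul_zero]
        have hppos : 0 < p (‖x‖ / l₂) := by
          have := hp_anti hs₂ (by norm_num : (1:ℝ) ∈ Icc (0:ℝ) 1) hs₂lt
          rwa [hp1] at this
        rw [hfl₁]
        exact mul_pos hl₂0 hppos
      · -- ‖x‖ < l₁
        have hs₁ : ‖x‖ / l₁ ∈ Icc (0:ℝ) 1 :=
          ⟨div_nonneg ha hl₁0.le, (div_le_one hl₁0).mpr ha1.le⟩
        have ht : l₁ / l₂ ∈ Icc (0:ℝ) 1 :=
          ⟨div_nonneg hl₁0.le hl₂0.le, (div_le_one hl₂0).mpr hlt.le⟩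
        have htlt : l₁ / l₂ < 1 := (div_lt_one hl₂0).mpr hlt
        have hk := hkey _ hs₁ _ ht
        have heq : (l₁ / l₂) * (‖x‖ / l₁) = ‖x‖ / l₂ := by
          field_simp
        rw [heq] at hk
        -- f l₂ = l₂ * p (‖x‖/l₂) ≥ l₂ * ((l₁/l₂) * p(‖x‖/l₁) + (1 - l₁/l₂))
        --      = l₁ * p(‖x‖/l₁) + (l₂ - l₁) > f l₁
        have h2 : l₂ * ((l₁ / l₂) * p (‖x‖ / l₁) + (1 - l₁ / l₂)) ≤ l₂ * p (‖x‖ / l₂) :=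
          mul_le_mul_of_nonneg_left hk hl₂0.le
        have h3 : l₂ * ((l₁ / l₂) * p (‖x‖ / l₁) + (1 - l₁ / l₂))
            = l₁ * p (‖x‖ / l₁) + (l₂ - l₁) := by
          field_simp
        rw [h3] at h2
        simp only [hf]
        linarith
  -- f ‖x‖ = 0
  have hf0 : f ‖x‖ = 0 := by
    rcases ha.eq_or_lt with ha0 | ha0
    · rw [hf]; simp [← ha0]
    · rw [hf]; simp only [div_self ha0.ne', hp1, mul_zero]
  -- continuity of f on [‖x‖, ‖x‖ + ‖y‖]
  have hcont : ContinuousOn f (Icc ‖x‖ (‖x‖ + ‖y‖)) := by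
    rcases ha.eq_or_lt with ha0 | ha0
    · apply ContinuousOn.congr (f := fun l : ℝ => l * p 0) (by fun_prop)
      intro l _
      rw [hf]; simp [← ha0]
    · have hdiv : ContinuousOn (fun l : ℝ => ‖x‖ / l) (Icc ‖x‖ (‖x‖ + ‖y‖)) :=
        continuousOn_const.div continuousOn_id
          (fun l hl => (lt_of_lt_of_le ha0 hl.1).ne')
      have hmaps : MapsTo (fun l : ℝ => ‖x‖ / l) (Icc ‖x‖ (‖x‖ + ‖y‖)) (Icc 0 1) := by
        intro l hl
        have hl0 : 0 < l := lt_of_lt_of_le ha0 hl.1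
        exact ⟨div_nonneg ha hl0.le, (div_le_one hl0).mpr hl.1⟩
      exact continuousOn_id.mul (hp_cont.comp hdiv hmaps)
  -- existence via IVT
  have hival := intermediate_value_Icc (by linarith : ‖x‖ ≤ ‖x‖ + ‖y‖) hcont
  have hmem : ‖y‖ ∈ Icc (f ‖x‖) (f (‖x‖ + ‖y‖)) := by
    constructor
    · rw [hf0]; exact hb.le
    · have hab : (0:ℝ) < ‖x‖ + ‖y‖ := by linarith
      have hsI : ‖x‖ / (‖x‖ + ‖y‖) ∈ Icc (0:ℝ) 1 :=
        ⟨div_nonneg ha hab.le, (div_le_one hab).mpr (by linarith)⟩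
      have := hlb _ hsI
      have h4 : (‖x‖ + ‖y‖) * (1 - ‖x‖ / (‖x‖ + ‖y‖)) ≤ f (‖x‖ + ‖y‖) := by
        rw [hf]
        exact mul_le_mul_of_nonneg_left this hab.le
      have h5 : (‖x‖ + ‖y‖) * (1 - ‖x‖ / (‖x‖ + ‖y‖)) = ‖y‖ := by
        field_simp
        ring
      linarith
  obtain ⟨l, hlmem, hfl⟩ := hival hmem
  have hl_gt : ‖x‖ < l := by
    rcases hlmem.1.eq_or_lt with h | h
    · exfalso; rw [← h, hf0] at hfl; linarith
    · exact h
  have hl_Ici : l ∈ Ici ‖x‖ := hl_gt.le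
  -- b ≤ l
  have hb_le_l : ‖y‖ ≤ l := by
    have hsI : ‖x‖ / l ∈ Icc (0:ℝ) 1 :=
      ⟨div_nonneg ha (ha.trans_lt hl_gt).le, (div_le_one (ha.trans_lt hl_gt)).mpr hl_gt.le⟩
    have := (hp_maps _ hsI).2
    calc ‖y‖ = l * p (‖x‖ / l) := hfl.symm
    _ ≤ l * 1 := mul_le_mul_of_nonneg_left this (ha.trans_lt hl_gt).le
    _ = l := mul_one l
  -- the gauge set is exactly (l, ∞)
  have hl0 : 0 < l := ha.trans_lt hl_gt
  have hset : {r : ℝ | 0 < r ∧ (x, y) ∈ r • D} = Ioi l := by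
    ext r
    simp only [mem_setOf_eq, mem_Ioi]
    constructor
    · rintro ⟨hr, hmemr⟩
      rw [mem_smul_set_iff_inv_smul_mem₀ hr.ne', hD] at hmemr
      simp only [Prod.smul_mk, mem_setOf_eq, norm_smul, norm_inv, Real.norm_eq_abs,
        abs_of_pos hr] at hmemr
      obtain ⟨h1, h2, h3⟩ := hmemr
      have har : ‖x‖ < r := by
        rw [inv_mul_lt_iff₀ hr] at h1; simpa using h1
      have hfr : f l < f r := by
        rw [hfl]
        rw [hf]
        have : r⁻¹ * ‖x‖ = ‖x‖ / r := by ring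
        rw [this] at h3
        calc ‖y‖ = r * (r⁻¹ * ‖y‖) := by field_simp
        _ < r * p (‖x‖ / r) := mul_lt_mul_of_pos_left h3 hr
      exact (hmono.lt_iff_lt hl_Ici har.le).mp hfr
    · intro hlr
      have hr : 0 < r := hl0.trans hlr
      refine ⟨hr, ?_⟩
      rw [mem_smul_set_iff_inv_smul_mem₀ hr.ne', hD]
      simp only [Prod.smul_mk, mem_setOf_eq, norm_smul, norm_inv, Real.norm_eq_abs,
        abs_of_pos hr]
      have har : ‖x‖ < r := hl_gt.trans hlr
      have hflr : f l < f r := hmono hl_Ici (har.le) hlr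
      refine ⟨?_, ?_, ?_⟩
      · rw [inv_mul_lt_iff₀ hr]; simpa using har
      · rw [inv_mul_lt_iff₀ hr]
        have : ‖y‖ ≤ l := hb_le_l
        simpa using this.trans_lt hlr
      · rw [hfl, hf] at hflr
        rw [inv_mul_eq_div, inv_mul_eq_div, div_lt_iff₀ hr]
        calc ‖y‖ < r * p (‖x‖ / r) := hflr
        _ = p (‖x‖ / r) * r := mul_comm _ _
  have hgauge : gauge D (x, y) = l := by
    rw [gauge, hset, csInf_Ioi]
  constructor
  · refine ⟨l, ⟨hl_gt, hfl.symm⟩, ?_⟩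
    rintro l' ⟨hl', hfl'⟩
    exact hmono.injOn hl'.le hl_Ici (hfl'.symm.trans hfl.symm)
  · rw [hgauge]
    exact ⟨hl_gt, hfl.symm⟩
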